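/- Let n ≥ 1, let W be an n×n real matrix that is symmetric and doubly stochastic (all entries nonnegative, every row and every column sums to 1), and let v₁, …, vₙ be vectors in a real inner product space with ∑_{i=1}^n vᵢ = 0. Then ∑_{i=1}^n ∑_{j=1}^n W i j ⟨vᵢ, vⱼ⟩ ≤ σ₂(W) · ∑_{i=1}^n ‖vᵢ‖², where σ₂(W) denotes the operator norm of the matrix W − (1/n)𝟙𝟙ᵀ acting on Euclidean n-space (𝟙 the all-ones vector). -/

import Mathlib

open scoped RealInnerProductSpace BigOperators

/-- `σ₂(W)`: the operator norm of `W − (1/n)𝟙𝟙ᵀ` acting on Euclidean `n`-space. -/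
noncomputable def sigma2 {n : ℕ} (W : Matrix (Fin n) (Fin n) ℝ) : ℝ :=
  ‖(Matrix.toEuclideanCLM (𝕜 := ℝ) (W - (n : ℝ)⁻¹ • Matrix.of fun _ _ => (1 : ℝ)) :
      EuclideanSpace ℝ (Fin n) →L[ℝ] EuclideanSpace ℝ (Fin n))‖

theorem stmt0 {n : ℕ} (hn : 1 ≤ n) (W : Matrix (Fin n) (Fin n) ℝ)
    (hsymm : W.IsSymm)
    (hnonneg : ∀ i j, 0 ≤ W i j)
    (hrow : ∀ i, ∑ j, W i j = 1)
    (hcol : ∀ j, ∑ i, W i j = 1)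
    {E : Type*} [NormedAddCommGroup E] [InnerProductSpace ℝ E]
    (v : Fin n → E) (hv : ∑ i, v i = 0) :
    ∑ i, ∑ j, W i j * ⟪v i, v j⟫ ≤ sigma2 W * ∑ i, ‖v i‖ ^ 2 := by
  classical
  set M : Matrix (Fin n) (Fin n) ℝ :=
    W - (n : ℝ)⁻¹ • Matrix.of fun _ _ => (1 : ℝ) with hM
  set T : EuclideanSpace ℝ (Fin n) →L[ℝ] EuclideanSpace ℝ (Fin n) :=
    Matrix.toEuclideanCLM (𝕜 := ℝ) M with hT
  -- Step 1: replace W by M using ∑ v = 0.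
  have step1 : ∑ i, ∑ j, W i j * ⟪v i, v j⟫ = ∑ i, ∑ j, M i j * ⟪v i, v j⟫ := by
    have h0 : ∑ i, ∑ j, ⟪v i, v j⟫ = 0 := by
      have : ∑ i, ∑ j, ⟪v i, v j⟫ = ⟪∑ i, v i, ∑ j, v j⟫ := by
        rw [sum_inner]
        exact Finset.sum_congr rfl fun i _ => (inner_sum _ _ _).symm
      rw [this, hv, inner_zero_left]
    have expand : ∑ i, ∑ j, M i j * ⟪v i, v j⟫
        = ∑ i, ∑ j, W i j * ⟪v i, v j⟫ - (n : ℝ)⁻¹ * ∑ i, ∑ j, ⟪v i, v j⟫ := by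
      simp only [hM, Matrix.sub_apply, Matrix.smul_apply, Matrix.of_apply, smul_eq_mul,
        sub_mul, Finset.sum_sub_distrib, mul_one, Finset.mul_sum]
    rw [expand, h0]; ring
  rw [step1]
  -- Step 2: orthonormal basis of the span of the v i.
  set K := Submodule.span ℝ (Set.range v) with hK
  have : FiniteDimensional ℝ K :=
    FiniteDimensional.span_of_finite ℝ (Set.finite_range v)
  set m := Module.finrank ℝ K with hm
  let b : OrthonormalBasis (Fin m) ℝ K := stdOrthonormalBasis ℝ K
  let v' : Fin n → K := fun i => ⟨v i, Submodule.subset_span (Set.mem_range_self i)⟩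
  let c : Fin m → Fin n → ℝ := fun k i => ⟪(b k : K), v' i⟫
  have hinner : ∀ i j, ⟪v i, v j⟫ = ∑ k, c k i * c k j := by
    intro i j
    have := b.sum_inner_mul_inner (v' i) (v' j)
    have h2 : (⟪v' i, v' j⟫ : ℝ) = ⟪v i, v j⟫ := rfl
    rw [← h2, ← this]
    exact Finset.sum_congr rfl fun k _ => by
      simp [c, real_inner_comm]
  have hnorm : ∀ i, ‖v i‖ ^ 2 = ∑ k, c k i ^ 2 := by
    intro i
    have := hinner i i
    rw [real_inner_self_eq_norm_sq] at this
    simpa [sq] using this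
  -- Step 3: quadratic form bound per coordinate.
  have key : ∀ k : Fin m, ∑ i, ∑ j, M i j * (c k i * c k j) ≤ ‖T‖ * ∑ i, c k i ^ 2 := by
    intro k
    set x : EuclideanSpace ℝ (Fin n) := (WithLp.equiv 2 _).symm (fun i => c k i) with hx
    have hTx : ∀ i, T x i = ∑ j, M i j * c k j := by
      intro i
      rw [hx, hT, WithLp.equiv_symm_apply, Matrix.toEuclideanCLM_toLp]
      simp [Matrix.mulVec, dotProduct]
    have hquad : ∑ i, ∑ j, M i j * (c k i * c k j) = ⟪x, T x⟫ := by
      rw [PiLp.inner_apply]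
      refine Finset.sum_congr rfl fun i _ => ?_
      have hxi : x i = c k i := rfl
      simp only [hxi, hTx i, RCLike.inner_apply, starRingEnd_apply, star_trivial,
        Finset.mul_sum]
      rw [Finset.sum_mul]
      exact Finset.sum_congr rfl fun j _ => by ring
    have hxnorm : ‖x‖ ^ 2 = ∑ i, c k i ^ 2 := by
      rw [EuclideanSpace.norm_eq, Real.sq_sqrt (by positivity)]
      exact Finset.sum_congr rfl fun i _ => by simp [hx, sq_abs]
    calc ∑ i, ∑ j, M i j * (c k i * c k j) = ⟪x, T x⟫ := hquad
      _ ≤ ‖x‖ * ‖T x‖ := real_inner_le_norm _ _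
      _ ≤ ‖x‖ * (‖T‖ * ‖x‖) := by
          have := T.le_opNorm x
          exact mul_le_mul_of_nonneg_left this (norm_nonneg _)
      _ = ‖T‖ * ‖x‖ ^ 2 := by ring
      _ = ‖T‖ * ∑ i, c k i ^ 2 := by rw [hxnorm]
  -- Step 4: assemble.
  have lhs_eq : ∑ i, ∑ j, M i j * ⟪v i, v j⟫
      = ∑ k, ∑ i, ∑ j, M i j * (c k i * c k j) := by
    calc ∑ i, ∑ j, M i j * ⟪v i, v j⟫
        = ∑ i, ∑ j, ∑ k, M i j * (c k i * c k j) := by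
          refine Finset.sum_congr rfl fun i _ => Finset.sum_congr rfl fun j _ => ?_
          rw [hinner i j, Finset.mul_sum]
      _ = ∑ i, ∑ k, ∑ j, M i j * (c k i * c k j) :=
          Finset.sum_congr rfl fun i _ => Finset.sum_comm
      _ = ∑ k, ∑ i, ∑ j, M i j * (c k i * c k j) := Finset.sum_comm
  have rhs_eq : ∑ i, ‖v i‖ ^ 2 = ∑ k, ∑ i, c k i ^ 2 := by
    calc ∑ i, ‖v i‖ ^ 2 = ∑ i, ∑ k, c k i ^ 2 := Finset.sum_congr rfl fun i _ => hnorm i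
      _ = ∑ k, ∑ i, c k i ^ 2 := Finset.sum_comm
  rw [lhs_eq]
  have : ∑ k, ∑ i, ∑ j, M i j * (c k i * c k j) ≤ ∑ k : Fin m, ‖T‖ * ∑ i, c k i ^ 2 :=
    Finset.sum_le_sum fun k _ => key k
  calc ∑ k, ∑ i, ∑ j, M i j * (c k i * c k j)
      ≤ ∑ k : Fin m, ‖T‖ * ∑ i, c k i ^ 2 := this
    _ = ‖T‖ * ∑ k, ∑ i, c k i ^ 2 := by rw [Finset.mul_sum]
    _ = sigma2 W * ∑ i, ‖v i‖ ^ 2 := by rw [← rhs_eq]; rfl
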